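/- The group ⟨a, b | a³, b³, (ab)³, (ab⁻¹)³⟩ is isomorphic to the Heisenberg group over ℤ/3ℤ, i.e., the group of 3×3 upper unitriangular matrices over ℤ/3ℤ; in particular it has order 27. -/

import Mathlib

open FreeGroup Matrix

/-- The monoid of 3×3 upper unitriangular matrices over `R` (which is in fact a
group under matrix multiplication): the Heisenberg group over `R`. -/
def Heisenberg (R : Type) [CommRing R] : Submonoid (Matrix (Fin 3) (Fin 3) R) where
  carrier := {M | M 0 0 = 1 ∧ M 1 1 = 1 ∧ M 2 2 = 1 ∧ M 1 0 = 0 ∧ M 2 0 = 0 ∧ M 2 1 = 0}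
  one_mem' := by simp [Matrix.one_apply]
  mul_mem' := by
    rintro A B ⟨hA1, hA2, hA3, hA4, hA5, hA6⟩ ⟨hB1, hB2, hB3, hB4, hB5, hB6⟩
    refine ⟨?_, ?_, ?_, ?_, ?_, ?_⟩ <;>
      simp [Matrix.mul_apply, Fin.sum_univ_three, hA1, hA2, hA3, hA4, hA5, hA6,
        hB1, hB2, hB3, hB4, hB5, hB6]

section Aux

/-! ### The Heisenberg group over `ZMod 3`, as an explicit group structure on triples -/

@[ext]
structure HG : Type where
  x : ZMod 3
  y : ZMod 3
  z : ZMod 3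
deriving DecidableEq, Fintype

namespace HG

instance : Mul HG := ⟨fun g h => ⟨g.x + h.x, g.y + h.y, g.z + h.z + g.x * h.y⟩⟩
instance : One HG := ⟨⟨0,0,0⟩⟩
instance : Inv HG := ⟨fun g => ⟨-g.x, -g.y, -g.z + g.x * g.y⟩⟩

lemma mul_def (g h : HG) : g * h = ⟨g.x + h.x, g.y + h.y, g.z + h.z + g.x * h.y⟩ := rfl
lemma one_def : (1 : HG) = ⟨0,0,0⟩ := rfl
lemma inv_def (g : HG) : g⁻¹ = ⟨-g.x, -g.y, -g.z + g.x * g.y⟩ := rfl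

instance : Group HG where
  mul_assoc g h k := by ext <;> simp [mul_def] <;> ring
  one_mul g := by ext <;> simp [mul_def, one_def]
  mul_one g := by ext <;> simp [mul_def, one_def]
  inv_mul_cancel g := by ext <;> simp [mul_def, one_def, inv_def] <;> ring

lemma cube (g : HG) : g ^ 3 = 1 := by
  have h : ∀ g : HG, g * g * g = 1 := by decide
  calc g^3 = g * g * g := by rw [pow_succ, pow_succ, pow_one]
    _ = 1 := h g

def A : HG := ⟨1,0,0⟩
def B : HG := ⟨0,1,0⟩

lemma A_pow (n : ℕ) : A ^ n = ⟨(n : ZMod 3), 0, 0⟩ := by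
  induction n with
  | zero => simp [one_def]
  | succ n ih => rw [pow_succ, ih]; ext <;> simp [mul_def, A] <;> push_cast <;> ring

lemma B_pow (n : ℕ) : B ^ n = ⟨0, (n : ZMod 3), 0⟩ := by
  induction n with
  | zero => simp [one_def]
  | succ n ih => rw [pow_succ, ih]; ext <;> simp [mul_def, B] <;> push_cast <;> ring

lemma C_val : B⁻¹ * A⁻¹ * B * A = ⟨0, 0, -1⟩ := by decide

lemma C_pow (n : ℕ) : (⟨0,0,-1⟩ : HG) ^ n = ⟨0, 0, -(n : ZMod 3)⟩ := by
  induction n with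
  | zero => simp [one_def]
  | succ n ih => rw [pow_succ, ih]; ext <;> simp [mul_def] <;> push_cast <;> ring

lemma nf (i j k : ℕ) :
    A ^ i * B ^ j * (B⁻¹ * A⁻¹ * B * A) ^ k =
      ⟨(i : ZMod 3), (j : ZMod 3), (i : ZMod 3) * (j : ZMod 3) - (k : ZMod 3)⟩ := by
  rw [C_val, A_pow, B_pow, C_pow]
  ext <;> simp [mul_def] <;> ring

end HG

/-- The explicit triple model is isomorphic to the matrix model. -/
def heisEquiv : HG ≃* Heisenberg (ZMod 3) where
  toFun g := ⟨!![1, g.x, g.z; 0, 1, g.y; 0, 0, 1], by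
    refine ⟨?_, ?_, ?_, ?_, ?_, ?_⟩ <;> simp [Matrix.vecHead, Matrix.vecTail]⟩
  invFun M := ⟨M.1 0 1, M.1 1 2, M.1 0 2⟩
  left_inv g := by ext <;> simp
  right_inv M := by
    obtain ⟨M, h1, h2, h3, h4, h5, h6⟩ := M
    apply Subtype.ext
    dsimp only
    ext i j
    fin_cases i <;> fin_cases j <;> simp [Matrix.vecHead, Matrix.vecTail, h1, h2, h3, h4, h5, h6]
  map_mul' g h := by
    apply Subtype.ext
    show (!![1, (g*h).x, (g*h).z; 0, 1, (g*h).y; 0, 0, 1] : Matrix (Fin 3) (Fin 3) (ZMod 3))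
      = !![1, g.x, g.z; 0, 1, g.y; 0, 0, 1] * !![1, h.x, h.z; 0, 1, h.y; 0, 0, 1]
    ext i j
    fin_cases i <;> fin_cases j <;>
      simp [Matrix.mul_apply, Fin.sum_univ_three, HG.mul_def, Matrix.vecHead, Matrix.vecTail] <;> ring

/-! ### Group-theoretic lemmas about groups with the given relations -/

private lemma pow3 {G} [Group G] (a : G) : a^3 = a*a*a := by
  rw [pow_succ, pow_succ, pow_one]

private lemma tri {G} [Group G] {u v : G} (h : (u*v)^3 = 1) :
    u*v*u = v⁻¹*u⁻¹*v⁻¹ := by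
  have h1 : (u*v*u)*(v*u*v) = 1 := by
    calc (u*v*u)*(v*u*v) = (u*v)^3 := by rw [pow3]; group
    _ = 1 := h
  have h2 : (v⁻¹*u⁻¹*v⁻¹)*(v*u*v) = 1 := by group
  exact mul_right_cancel (h1.trans h2.symm)

private lemma aux_comm {G} [Group G] {x y : G} (hy : y^3=1)
    (hxy : (x*y)^3=1) (hxy' : (x*y⁻¹)^3=1) :
    x * (y⁻¹*x⁻¹*y*x) = (y⁻¹*x⁻¹*y*x) * x := by
  have hy2 : y⁻¹*y⁻¹ = y := by
    have h1 : y*(y*y) = 1 := by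
      calc y*(y*y) = y^3 := by rw [pow3]; group
      _ = 1 := hy
    have h2 : y⁻¹ = y*y := inv_eq_of_mul_eq_one_right h1
    rw [h2]
    calc (y*y)*(y*y) = y*(y*(y*y)) := by group
    _ = y := by rw [h1, mul_one]
  have hxiy3 : (x⁻¹*y)^3 = 1 := by
    have h : (x⁻¹*y)^3 = y⁻¹ * ((x*y⁻¹)^3)⁻¹ * y := by
      rw [pow3, pow3]; group
    rw [h, hxy']; group
  have T1 : x*y*x = y⁻¹*x⁻¹*y⁻¹ := tri hxy
  have T4 : x⁻¹*y*x⁻¹ = y⁻¹*x*y⁻¹ := by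
    have h := tri hxiy3; rwa [inv_inv] at h
  calc x * (y⁻¹*x⁻¹*y*x)
      = x*y⁻¹*(x⁻¹*y*x⁻¹)*(x*x) := by group
    _ = x*y⁻¹*(y⁻¹*x*y⁻¹)*(x*x) := by rw [T4]
    _ = x*(y⁻¹*y⁻¹)*(x*y⁻¹*x*x) := by group
    _ = x*y*(x*y⁻¹*x*x) := by rw [hy2]
    _ = (x*y*x)*(y⁻¹*(x*x)) := by group
    _ = (y⁻¹*x⁻¹*y⁻¹)*(y⁻¹*(x*x)) := by rw [T1]
    _ = y⁻¹*x⁻¹*(y⁻¹*y⁻¹)*(x*x) := by group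
    _ = y⁻¹*x⁻¹*y*(x*x) := by rw [hy2]
    _ = (y⁻¹*x⁻¹*y*x)*x := by group

private lemma cube_comm {G} [Group G] {x y c : G} (hx : x^3 = 1) (hy : y^3 = 1)
    (hxy : (x*y)^3 = 1)
    (hcx : c*x = x*c) (hcy : c*y = y*c) (hyx : y*x = x*y*c) : c^3 = 1 := by
  have key : (x*y)^3 = x^3*y^3*c^3 := by
    calc (x*y)^3 = x*(y*x)*(y*x)*y := by rw [pow3]; group
    _ = x*(x*y*c)*(x*y*c)*y := by rw [hyx]
    _ = x*x*y*(c*x)*y*(c*y) := by group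
    _ = x*x*y*(x*c)*y*(y*c) := by rw [hcx, hcy]
    _ = x*x*(y*x)*(c*y)*y*c := by group
    _ = x*x*(x*y*c)*(y*c)*y*c := by rw [hyx, hcy]
    _ = x*x*x*y*c*y*(c*y)*c := by group
    _ = x*x*x*y*c*y*(y*c)*c := by rw [hcy]
    _ = x*x*x*y*(c*y)*y*(c*c) := by group
    _ = x*x*x*y*(y*c)*y*(c*c) := by rw [hcy]
    _ = x*x*x*y*y*(c*y)*(c*c) := by group
    _ = x*x*x*y*y*(y*c)*(c*c) := by rw [hcy]
    _ = x^3*y^3*c^3 := by rw [pow3, pow3, pow3]; group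
  rw [hx, hy, one_mul, one_mul] at key
  rw [← key, hxy]

private lemma normal_form {G : Type} [Group G] {x y : G} (hx : x^3=1) (hy : y^3=1)
    (hxy : (x*y)^3=1) (hxy' : (x*y⁻¹)^3=1) (w : FreeGroup (Fin 2)) :
    ∃ i j k : Fin 3,
      (FreeGroup.lift ![x, y]) w = x^(i:ℕ) * y^(j:ℕ) * (y⁻¹*x⁻¹*y*x)^(k:ℕ) := by
  set c := y⁻¹*x⁻¹*y*x with hc
  have hcx : c * x = x * c := (aux_comm hy hxy hxy').symm
  have hyx3 : (y*x)^3 = 1 := by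
    have h : (y*x)^3 = x⁻¹*((x*y)^3)*x := by rw [pow3, pow3]; group
    rw [h, hxy]; group
  have hyxi3 : (y*x⁻¹)^3 = 1 := by
    have h : (y*x⁻¹)^3 = ((x*y⁻¹)^3)⁻¹ := by rw [pow3, pow3]; group
    rw [h, hxy']; group
  have hcy : c * y = y * c := by
    have h := (aux_comm (x := y) (y := x) hx hyx3 hyxi3).symm
    have hrw : x⁻¹*y⁻¹*x*y = c⁻¹ := by rw [hc]; group
    rw [hrw] at h
    calc c * y = c * (y * c⁻¹) * c := by group
    _ = c * (c⁻¹ * y) * c := by rw [← h]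
    _ = y * c := by group
  have hyx : y * x = x * y * c := by rw [hc]; group
  have hc3 : c^3 = 1 := cube_comm hx hy hxy hcx hcy hyx
  suffices hs : ∃ i j k : ℕ, (FreeGroup.lift ![x, y]) w = x^i * y^j * c^k by
    obtain ⟨i, j, k, h⟩ := hs
    refine ⟨⟨i % 3, Nat.mod_lt _ (by norm_num)⟩, ⟨j % 3, Nat.mod_lt _ (by norm_num)⟩,
      ⟨k % 3, Nat.mod_lt _ (by norm_num)⟩, ?_⟩
    rw [h, pow_eq_pow_mod i hx, pow_eq_pow_mod j hy, pow_eq_pow_mod k hc3]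
  have hCx : Commute c x := hcx
  have hCy : Commute c y := hcy
  have swap1 : ∀ a : ℕ, y * x^a = x^a * y * c^a := by
    intro a
    induction a with
    | zero => simp
    | succ a ih =>
      calc y * x^(a+1) = (y * x^a) * x := by rw [pow_succ, ← mul_assoc]
      _ = x^a * y * (c^a * x) := by rw [ih]; group
      _ = x^a * y * (x * c^a) := by rw [(hCx.pow_left a).eq]
      _ = x^a * (y * x) * c^a := by group
      _ = x^a * (x * y * c) * c^a := by rw [hyx]
      _ = x^(a+1) * y * c^(a+1) := by rw [pow_succ, pow_succ]; group
  have swap : ∀ j a : ℕ, y^j * x^a = x^a * y^j * c^(j*a) := by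
    intro j a
    induction j with
    | zero => simp
    | succ j ih =>
      calc y^(j+1) * x^a = y * (y^j * x^a) := by rw [pow_succ']; group
      _ = y * (x^a * y^j * c^(j*a)) := by rw [ih]
      _ = (y * x^a) * y^j * c^(j*a) := by group
      _ = (x^a * y * c^a) * y^j * c^(j*a) := by rw [swap1]
      _ = x^a * y * (c^a * y^j) * c^(j*a) := by group
      _ = x^a * y * (y^j * c^a) * c^(j*a) := by rw [((hCy.pow_right j).pow_left a).eq]
      _ = x^a * y^(j+1) * c^((j+1)*a) := by
          rw [pow_succ' y j, Nat.succ_mul, pow_add]; group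
  have mulf : ∀ i j k a b m : ℕ,
      (x^i*y^j*c^k) * (x^a*y^b*c^m) = x^(i+a) * y^(j+b) * c^(k+m+j*a) := by
    intro i j k a b m
    calc (x^i*y^j*c^k) * (x^a*y^b*c^m)
        = x^i*y^j*(c^k*x^a)*(y^b*c^m) := by group
      _ = x^i*y^j*(x^a*c^k)*(y^b*c^m) := by rw [((hCx.pow_right a).pow_left k).eq]
      _ = x^i*(y^j*x^a)*(c^k*y^b)*c^m := by group
      _ = x^i*(x^a*y^j*c^(j*a))*(y^b*c^k)*c^m := by
          rw [swap, ((hCy.pow_right b).pow_left k).eq]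
      _ = x^i*x^a*y^j*(c^(j*a)*y^b)*(c^k*c^m) := by group
      _ = x^i*x^a*y^j*(y^b*c^(j*a))*(c^k*c^m) := by
          rw [((hCy.pow_right b).pow_left (j*a)).eq]
      _ = x^(i+a) * y^(j+b) * c^(k+m+j*a) := by
          rw [pow_add, pow_add, pow_add, pow_add c k m]; group
  have l0 : (FreeGroup.lift ![x, y]) (FreeGroup.of (0 : Fin 2)) = x := by simp
  have l1 : (FreeGroup.lift ![x, y]) (FreeGroup.of (1 : Fin 2)) = y := by simp
  have hxinv : x⁻¹ = x^2 := by
    refine inv_eq_of_mul_eq_one_right ?_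
    rw [← pow_succ']; exact hx
  have hyinv : y⁻¹ = y^2 := by
    refine inv_eq_of_mul_eq_one_right ?_
    rw [← pow_succ']; exact hy
  induction w using FreeGroup.induction_on with
  | C1 => exact ⟨0, 0, 0, by simp⟩
  | of i =>
    match i with
    | 0 => exact ⟨1, 0, 0, by
        show (FreeGroup.lift ![x, y]) (FreeGroup.of (0 : Fin 2)) = x^1*y^0*c^0
        simp [l0]⟩
    | 1 => exact ⟨0, 1, 0, by
        show (FreeGroup.lift ![x, y]) (FreeGroup.of (1 : Fin 2)) = x^0*y^1*c^0
        simp [l1]⟩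
  | inv_of i _ =>
    match i with
    | 0 =>
      refine ⟨2, 0, 0, ?_⟩
      show (FreeGroup.lift ![x, y]) ((FreeGroup.of (0 : Fin 2))⁻¹) = x^2*y^0*c^0
      rw [_root_.map_inv, l0, hxinv]; simp
    | 1 =>
      refine ⟨0, 2, 0, ?_⟩
      show (FreeGroup.lift ![x, y]) ((FreeGroup.of (1 : Fin 2))⁻¹) = x^0*y^2*c^0
      rw [_root_.map_inv, l1, hyinv]; simp
  | mul u v hu hv =>
    obtain ⟨i, j, k, hu⟩ := hu
    obtain ⟨a, b, m, hv⟩ := hv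
    exact ⟨i+a, j+b, k+m+j*a, by rw [_root_.map_mul, hu, hv, mulf]⟩

/-! ### The presented group -/

def relSet : Set (FreeGroup (Fin 2)) :=
  {(FreeGroup.of 0 : FreeGroup (Fin 2)) ^ 3, (FreeGroup.of 1 : FreeGroup (Fin 2)) ^ 3,
    (FreeGroup.of 0 * FreeGroup.of 1 : FreeGroup (Fin 2)) ^ 3,
    (FreeGroup.of 0 * (FreeGroup.of 1)⁻¹ : FreeGroup (Fin 2)) ^ 3}

def myN : Subgroup (FreeGroup (Fin 2)) := Subgroup.normalClosure relSet

instance : myN.Normal := Subgroup.normalClosure_normal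

theorem main_aux :
    Nonempty ((FreeGroup (Fin 2) ⧸ myN) ≃* Heisenberg (ZMod 3)) ∧
      Nat.card (FreeGroup (Fin 2) ⧸ myN) = 27 := by
  -- the projection to `HG`
  let φ : FreeGroup (Fin 2) →* HG := FreeGroup.lift ![HG.A, HG.B]
  have hker : myN ≤ φ.ker := by
    apply Subgroup.normalClosure_le_normal
    intro r hr
    simp only [relSet, Set.mem_insert_iff, Set.mem_singleton_iff] at hr
    rcases hr with rfl | rfl | rfl | rfl <;>
      · rw [SetLike.mem_coe, MonoidHom.mem_ker, map_pow]
        exact HG.cube _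
  let ψ : (FreeGroup (Fin 2) ⧸ myN) →* HG :=
    QuotientGroup.lift myN φ fun w hw => MonoidHom.mem_ker.1 (hker hw)
  set xq : FreeGroup (Fin 2) ⧸ myN := QuotientGroup.mk' myN (FreeGroup.of 0) with hxq
  set yq : FreeGroup (Fin 2) ⧸ myN := QuotientGroup.mk' myN (FreeGroup.of 1) with hyq
  set cq : FreeGroup (Fin 2) ⧸ myN := yq⁻¹*xq⁻¹*yq*xq with hcq
  have mem1 : ((FreeGroup.of 0 : FreeGroup (Fin 2)) ^ 3) ∈ myN :=
    Subgroup.subset_normalClosure (by simp [relSet])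
  have mem2 : ((FreeGroup.of 1 : FreeGroup (Fin 2)) ^ 3) ∈ myN :=
    Subgroup.subset_normalClosure (by simp [relSet])
  have mem3 : ((FreeGroup.of 0 * FreeGroup.of 1 : FreeGroup (Fin 2)) ^ 3) ∈ myN :=
    Subgroup.subset_normalClosure (by simp [relSet])
  have mem4 : ((FreeGroup.of 0 * (FreeGroup.of 1)⁻¹ : FreeGroup (Fin 2)) ^ 3) ∈ myN :=
    Subgroup.subset_normalClosure (by simp [relSet])
  have hx3 : xq^3 = 1 := by
    rw [hxq, ← map_pow, QuotientGroup.mk'_apply, QuotientGroup.eq_one_iff]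
    exact mem1
  have hy3 : yq^3 = 1 := by
    rw [hyq, ← map_pow, QuotientGroup.mk'_apply, QuotientGroup.eq_one_iff]
    exact mem2
  have hxy3 : (xq*yq)^3 = 1 := by
    rw [hxq, hyq, ← _root_.map_mul, ← map_pow, QuotientGroup.mk'_apply,
      QuotientGroup.eq_one_iff]
    exact mem3
  have hxyi3 : (xq*yq⁻¹)^3 = 1 := by
    rw [hxq, hyq, ← _root_.map_inv, ← _root_.map_mul, ← map_pow, QuotientGroup.mk'_apply,
      QuotientGroup.eq_one_iff]
    exact mem4
  -- every element has a normal form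
  have hmk : ∀ w : FreeGroup (Fin 2),
      QuotientGroup.mk' myN w = (FreeGroup.lift ![xq, yq]) w := by
    intro w
    exact FreeGroup.lift_unique (QuotientGroup.mk' myN) (fun i => by fin_cases i <;> rfl)
  have hnf : ∀ g : FreeGroup (Fin 2) ⧸ myN,
      ∃ i j k : Fin 3, g = xq^(i:ℕ) * yq^(j:ℕ) * cq^(k:ℕ) := by
    intro g
    obtain ⟨w, rfl⟩ := QuotientGroup.mk'_surjective myN g
    obtain ⟨i, j, k, h⟩ := normal_form hx3 hy3 hxy3 hxyi3 w
    exact ⟨i, j, k, by rw [hmk w, h, hcq]⟩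
  -- values of ψ
  have hψx : ψ xq = HG.A := by
    rw [hxq]
    show φ (FreeGroup.of 0) = HG.A
    simp [φ]
  have hψy : ψ yq = HG.B := by
    rw [hyq]
    show φ (FreeGroup.of 1) = HG.B
    simp [φ]
  have hψF : ∀ i j k : ℕ, ψ (xq^i * yq^j * cq^k) =
      ⟨(i : ZMod 3), (j : ZMod 3), (i : ZMod 3) * (j : ZMod 3) - (k : ZMod 3)⟩ := by
    intro i j k
    rw [_root_.map_mul, _root_.map_mul, map_pow, map_pow, map_pow, hcq,
      _root_.map_mul, _root_.map_mul, _root_.map_mul, _root_.map_inv, _root_.map_inv,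
      hψx, hψy, HG.nf]
  have cast_inj : ∀ a b : Fin 3, ((a : ℕ) : ZMod 3) = ((b : ℕ) : ZMod 3) → a = b := by
    decide
  -- ψ is bijective
  have hinj : Function.Injective ψ := by
    intro q1 q2 h
    obtain ⟨i1, j1, k1, rfl⟩ := hnf q1
    obtain ⟨i2, j2, k2, rfl⟩ := hnf q2
    rw [hψF, hψF, HG.mk.injEq] at h
    obtain ⟨h1, h2, h3⟩ := h
    obtain rfl : i1 = i2 := cast_inj _ _ h1
    obtain rfl : j1 = j2 := cast_inj _ _ h2
    obtain rfl : k1 = k2 := by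
      refine cast_inj _ _ ?_
      linear_combination -h3
    rfl
  have hsur : Function.Surjective ψ := by
    rintro ⟨a, b, z⟩
    refine ⟨xq^(a.val) * yq^(b.val) * cq^((a*b - z).val), ?_⟩
    rw [hψF]
    ext <;> simp [ZMod.natCast_val, ZMod.cast_id]
  refine ⟨⟨(MulEquiv.ofBijective ψ ⟨hinj, hsur⟩).trans heisEquiv⟩, ?_⟩
  rw [Nat.card_congr (MulEquiv.ofBijective ψ ⟨hinj, hsur⟩).toEquiv,
    Nat.card_eq_fintype_card]
  decide

end Aux

/-- The group `⟨a, b | a³, b³, (ab)³, (ab⁻¹)³⟩` is isomorphic to the Heisenberg group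
over `ℤ/3ℤ` (the 3×3 upper unitriangular matrices over `ℤ/3ℤ`); in particular it has
order 27. -/
theorem stmt_2 :
    letI N : Subgroup (FreeGroup (Fin 2)) := Subgroup.normalClosure
      {(of 0 : FreeGroup (Fin 2)) ^ 3, (of 1 : FreeGroup (Fin 2)) ^ 3,
        (of 0 * of 1 : FreeGroup (Fin 2)) ^ 3,
        (of 0 * (of 1)⁻¹ : FreeGroup (Fin 2)) ^ 3}
    Nonempty ((FreeGroup (Fin 2) ⧸ N) ≃* Heisenberg (ZMod 3)) ∧
      Nat.card (FreeGroup (Fin 2) ⧸ N) = 27 := by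
  exact main_aux
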